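/- Let 0 < a < b. The function g(θ) = exp(−a/θ) − exp(−b/θ) on θ ∈ (0,∞) attains its supremum at the unique maximizer θ* = (b − a)/log(b/a). -/

import Mathlib

open Real Set

lemma exp_interval_aux (a b : ℝ) (ha : 0 < a) (hab : a < b) :
    ∀ t ∈ Ioi (0:ℝ), t ≠ Real.log (b/a) / (b - a) →
      Real.exp (-a*t) - Real.exp (-b*t) <
        Real.exp (-a*(Real.log (b/a)/(b-a))) - Real.exp (-b*(Real.log (b/a)/(b-a))) := by
  have hb : 0 < b := ha.trans hab
  set L := Real.log (b/a) with hLdef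
  have hL0 : 0 < L := Real.log_pos (by rw [lt_div_iff₀ ha]; linarith)
  have hLeq : L = Real.log b - Real.log a := Real.log_div (ne_of_gt hb) (ne_of_gt ha)
  set ts := L / (b - a) with htsdef
  have hts0 : 0 < ts := div_pos hL0 (by linarith)
  set f : ℝ → ℝ := fun t => Real.exp (-a*t) - Real.exp (-b*t) with hf
  have hderiv : ∀ t : ℝ, HasDerivAt f (b * Real.exp (-b*t) - a * Real.exp (-a*t)) t := by
    intro t
    have h1 : HasDerivAt (fun t : ℝ => Real.exp (-a*t)) (Real.exp (-a*t) * (-a)) t := by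
      simpa using ((hasDerivAt_id t).const_mul (-a)).exp
    have h2 : HasDerivAt (fun t : ℝ => Real.exp (-b*t)) (Real.exp (-b*t) * (-b)) t := by
      simpa using ((hasDerivAt_id t).const_mul (-b)).exp
    have := h1.sub h2
    exact this.congr_deriv (by ring)
  have hcont : Continuous f := by
    fun_prop
  -- sign of derivative
  have hsign : ∀ t : ℝ, (b * Real.exp (-b*t) - a * Real.exp (-a*t) > 0 ↔ t < ts) := by
    intro t
    have ha' : a * Real.exp (-a*t) = Real.exp (Real.log a + (-a*t)) := by
      rw [Real.exp_add, Real.exp_log ha]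
    have hb' : b * Real.exp (-b*t) = Real.exp (Real.log b + (-b*t)) := by
      rw [Real.exp_add, Real.exp_log hb]
    rw [gt_iff_lt, sub_pos, ha', hb', Real.exp_lt_exp, htsdef, lt_div_iff₀ (by linarith : (0:ℝ) < b - a),
      hLeq]
    constructor <;> intro h <;> nlinarith
  have hmono : StrictMonoOn f (Icc 0 ts) := by
    apply strictMonoOn_of_deriv_pos (convex_Icc 0 ts) (hcont.continuousOn)
    intro t ht
    rw [interior_Icc] at ht
    rw [(hderiv t).deriv]
    exact (hsign t).mpr ht.2
  have hanti : StrictAntiOn f (Ici ts) := by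
    apply strictAntiOn_of_deriv_neg (convex_Ici ts) (hcont.continuousOn)
    intro t ht
    rw [interior_Ici] at ht
    rw [(hderiv t).deriv, sub_neg]
    by_contra hc
    push_neg at hc
    rcases lt_or_eq_of_le hc with h | h
    · exact absurd ((hsign t).mp (by linarith)) (not_lt.mpr (le_of_lt ht))
    · -- b exp = a exp means t = ts
      have : b * Real.exp (-b*t) - a * Real.exp (-a*t) = 0 := by linarith
      have h1 : Real.exp (Real.log b + (-b*t)) = Real.exp (Real.log a + (-a*t)) := by
        rw [Real.exp_add, Real.exp_add, Real.exp_log ha, Real.exp_log hb]; linarith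
      have h2 := Real.exp_injective h1
      have : t = ts := by
        rw [htsdef, eq_div_iff (by linarith : (b:ℝ) - a ≠ 0), hLeq]; nlinarith
      exact absurd ht (by simp [this])
  intro t ht htne
  rcases lt_or_gt_of_ne htne with h | h
  · exact hmono ⟨le_of_lt ht, le_of_lt h⟩ ⟨le_of_lt hts0, le_refl _⟩ h
  · exact hanti (mem_Ici.mpr (le_refl _)) (le_of_lt h) h

theorem exp_interval_prob_unique_maximizer
    (a b : ℝ) (ha : 0 < a) (hab : a < b) :
    0 < (b - a) / Real.log (b / a) ∧
    (∀ θ ∈ Ioi (0:ℝ),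
      Real.exp (-a / θ) - Real.exp (-b / θ) ≤
        Real.exp (-a / ((b - a) / Real.log (b / a))) -
          Real.exp (-b / ((b - a) / Real.log (b / a)))) ∧
    (∀ θ ∈ Ioi (0:ℝ),
      Real.exp (-a / θ) - Real.exp (-b / θ) =
        Real.exp (-a / ((b - a) / Real.log (b / a))) -
          Real.exp (-b / ((b - a) / Real.log (b / a))) →
      θ = (b - a) / Real.log (b / a)) := by
  have hb : 0 < b := ha.trans hab
  have hL0 : 0 < Real.log (b/a) := Real.log_pos (by rw [lt_div_iff₀ ha]; linarith)
  have hba : (0:ℝ) < b - a := by linarith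
  have hθs0 : 0 < (b - a) / Real.log (b / a) := div_pos hba hL0
  have key := exp_interval_aux a b ha hab
  have hrw : ∀ c : ℝ, -c / ((b - a) / Real.log (b / a)) = -c * (Real.log (b/a)/(b-a)) := by
    intro c; field_simp
  have hrw2 : ∀ c θ : ℝ, -c / θ = -c * (1/θ) := by intro c θ; ring
  refine ⟨hθs0, ?_, ?_⟩
  · intro θ hθ
    rcases eq_or_ne (1/θ) (Real.log (b/a)/(b-a)) with h | h
    · rw [hrw a, hrw b, ← h, ← hrw2, ← hrw2]
    · have := key (1/θ) (by simp [mem_Ioi.mp hθ]) h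
      rw [hrw a, hrw b, ← hrw2 a θ, ← hrw2 b θ] at *
      linarith
  · intro θ hθ heq
    by_contra hne
    have h1θ : (1/θ) ≠ Real.log (b/a)/(b-a) := by
      intro h
      apply hne
      have hθ0 : θ ≠ 0 := ne_of_gt (mem_Ioi.mp hθ)
      field_simp at h
      rw [eq_div_iff (ne_of_gt hL0)]
      linarith [h]
    have := key (1/θ) (by simp [mem_Ioi.mp hθ]) h1θ
    rw [hrw2 a θ, hrw2 b θ, hrw a, hrw b] at heq
    linarith
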